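/- Let 0 < s < ∞, Q/(Q+s) < p ≤ ∞ and 0 < q ≤ ∞. The operator T defined on sequences u: X → ℂ by Tu(x) = Σ_{|y| ≥ |x|, B(y)∩B(x)≠∅} (μ(B(y))/μ(B(x))) u(y) is well-defined and bounded on I^s_{p,q}(X). -/

import Mathlib

open MeasureTheory Metric Filter ENNReal NNReal

noncomputable section

/-- ℓ^p-type sum with weights, with the obvious modification (sup) when `p = ∞`. -/
def sumPartG {ι : Type*} (p : ℝ≥0∞) (w : ι → ℝ≥0∞) (f : ι → ℝ≥0∞) : ℝ≥0∞ :=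
  if p = ∞ then ⨆ i, f i else (∑' i, w i * f i ^ p.toReal) ^ (1 / p.toReal)

/-- The ball associated to a vertex `x` of the hyperbolic filling. -/
def vBall {Z X : Type*} [MetricSpace Z] (ξ : X → Z) (lvl : X → ℤ) (x : X) : Set Z :=
  Metric.ball (ξ x) ((2:ℝ) ^ (-(lvl x)))

/-- The sequence-space quasinorm of `I^s_{p,q}(X)`, for `g : X → ℝ≥0∞`. -/
def seqNorm {Z X : Type*} [MetricSpace Z] [MeasurableSpace Z] (μ : Measure Z)
    (ξ : X → Z) (lvl : X → ℤ) (s : ℝ) (p q : ℝ≥0∞) (g : X → ℝ≥0∞) : ℝ≥0∞ :=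
  sumPartG q (fun _ : ℤ => 1)
    (fun k => (2 : ℝ≥0∞) ^ ((k : ℝ) * s) *
      sumPartG p (fun x : {x : X // lvl x = k} => μ (vBall ξ lvl x.1)) (fun x => g x.1))

/-- The edge relation of the hyperbolic filling graph. -/
def edgeRel {Z X : Type*} [MetricSpace Z] (ξ : X → Z) (lvl : X → ℤ) (x y : X) : Prop :=
  x ≠ y ∧ |lvl x - lvl y| ≤ 1 ∧ (vBall ξ lvl x ∩ vBall ξ lvl y).Nonempty

/-- The magnitude `|du|` of the discrete derivative of `u : X → ℂ`. -/
def eDu {Z X : Type*} [MetricSpace Z] (ξ : X → Z) (lvl : X → ℤ) (u : X → ℂ) (x : X) : ℝ≥0∞ :=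
  (∑' y : {y : X // edgeRel ξ lvl x y}, (‖u y.1 - u x‖₊ : ℝ≥0∞) ^ (2:ℝ)) ^ ((1:ℝ)/2)

/-- The Poisson extension of `f`. -/
def poisson {Z X : Type*} [MetricSpace Z] [MeasurableSpace Z] (μ : Measure Z)
    (ξ : X → Z) (lvl : X → ℤ) (f : Z → ℂ) (x : X) : ℂ :=
  ⨍ z in vBall ξ lvl x, f z ∂μ

/-- The discrete convolution `T_n u = ∑_{|x| = n} u(x) ψ_x`. -/
def discConv {Z X : Type*} (lvl : X → ℤ) (ψ : X → Z → ℝ) (u : X → ℂ) (n : ℤ) (z : Z) : ℂ :=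
  ∑' x : {x : X // lvl x = n}, (ψ x.1 z : ℂ) * u x.1


set_option linter.unusedSectionVars false

namespace St9

lemma iSup_rpow' {ι : Sort*} (f : ι → ℝ≥0∞) {r : ℝ} (hr : 0 < r) :
    (⨆ i, f i) ^ r = ⨆ i, f i ^ r := by
  have h1 : ∀ x y : ℝ≥0∞, x ^ r ≤ y ↔ x ≤ y ^ (1/r) := by
    intro x y
    rw [← ENNReal.rpow_le_rpow_iff (show (0:ℝ) < 1/r by positivity), ← ENNReal.rpow_mul,
      mul_one_div, div_self hr.ne', ENNReal.rpow_one]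
  apply le_antisymm
  · rw [h1]
    refine iSup_le fun i => ?_
    rw [← h1]
    exact le_iSup (fun i => f i ^ r) i
  · exact iSup_le fun i => ENNReal.rpow_le_rpow (le_iSup f i) hr.le

lemma finset_rpow_le {ι : Type*} (F : Finset ι) (f : ι → ℝ≥0∞) {r : ℝ} (hr0 : 0 < r)
    (hr1 : r ≤ 1) : (∑ i ∈ F, f i) ^ r ≤ ∑ i ∈ F, f i ^ r := by
  classical
  induction F using Finset.cons_induction with
  | empty => simp [ENNReal.zero_rpow_of_pos hr0]
  | cons a F ha ih =>
      rw [Finset.sum_cons, Finset.sum_cons]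
      calc (f a + ∑ i ∈ F, f i) ^ r ≤ f a ^ r + (∑ i ∈ F, f i) ^ r :=
            ENNReal.rpow_add_le_add_rpow _ _ hr0.le hr1
        _ ≤ _ := by gcongr

lemma tsum_rpow_le {ι : Type*} (f : ι → ℝ≥0∞) {r : ℝ} (hr0 : 0 < r) (hr1 : r ≤ 1) :
    (∑' i, f i) ^ r ≤ ∑' i, f i ^ r := by
  rw [ENNReal.tsum_eq_iSup_sum, iSup_rpow' _ hr0]
  refine iSup_le fun F => ?_
  exact (finset_rpow_le F f hr0 hr1).trans (ENNReal.sum_le_tsum F)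

lemma rpow_self_mul {a : ℝ≥0∞} {c d : ℝ} (hc : 0 < c) (hd : 0 < d) :
    a ^ c * a ^ d = a ^ (c + d) := by
  rcases eq_or_ne a 0 with rfl | h0
  · simp [ENNReal.zero_rpow_of_pos hc, ENNReal.zero_rpow_of_pos hd,
      ENNReal.zero_rpow_of_pos (by positivity : (0:ℝ) < c + d)]
  rcases eq_or_ne a ∞ with rfl | htop
  · simp [ENNReal.top_rpow_of_pos hc, ENNReal.top_rpow_of_pos hd,
      ENNReal.top_rpow_of_pos (by positivity : (0:ℝ) < c + d)]
  · rw [← ENNReal.rpow_add _ _ h0 htop]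

lemma tsum_holder {ι : Type*} {P : ℝ} (hP : 1 < P) (w f : ι → ℝ≥0∞) :
    ∑' i, w i * f i ≤ (∑' i, w i) ^ (1 - 1/P) * (∑' i, w i * f i ^ P) ^ (1/P) := by
  letI : MeasurableSpace ι := ⊤
  haveI : MeasurableSingletonClass ι := ⟨fun _ => trivial⟩
  have hP0 : (0:ℝ) < P := by linarith
  have hP'pos : (0:ℝ) < 1 - 1/P := by
    have : 1/P < 1 := by rw [div_lt_one hP0]; linarith
    linarith
  set P' : ℝ := P/(P-1) with hP'def
  have hP'1 : 1 < P' := by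
    rw [hP'def, lt_div_iff₀ (by linarith : (0:ℝ) < P - 1)]; linarith
  have hconj : P'.HolderConjugate P := by
    exact ((Real.holderConjugate_iff_eq_conjExponent hP).2 hP'def).symm
  have key := ENNReal.lintegral_mul_le_Lp_mul_Lq (Measure.count (α := ι)) hconj
    (f := fun i => (w i) ^ (1 - 1/P)) (g := fun i => (w i) ^ (1/P) * f i)
    measurable_from_top.aemeasurable measurable_from_top.aemeasurable
  rw [lintegral_count, lintegral_count, lintegral_count] at key
  have e1 : ∀ i, ((fun i => (w i) ^ (1 - 1/P)) * fun i => (w i) ^ (1/P) * f i) i = w i * f i := by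
    intro i
    show (w i) ^ (1 - 1/P) * ((w i) ^ (1/P) * f i) = w i * f i
    rw [← mul_assoc, rpow_self_mul hP'pos (by positivity)]
    norm_num
  have e2 : ∀ i, ((w i) ^ (1 - 1/P)) ^ P' = w i := by
    intro i
    rw [← ENNReal.rpow_mul]
    have hne : P - 1 ≠ 0 := by linarith
    have h7 : 1 - 1/P = (P-1)/P := by field_simp
    have : (1 - 1/P) * P' = 1 := by
      rw [h7, hP'def, div_mul_div_comm, mul_comm (P-1) P, div_self (by positivity)]
    rw [this, ENNReal.rpow_one]
  have e3 : ∀ i, ((w i) ^ (1/P) * f i) ^ P = w i * f i ^ P := by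
    intro i
    rw [ENNReal.mul_rpow_of_nonneg _ _ hP0.le, ← ENNReal.rpow_mul,
      one_div_mul_cancel hP0.ne', ENNReal.rpow_one]
  have e4 : (1:ℝ)/P' = 1 - 1/P := by rw [hP'def]; field_simp
  simp only [e1, e2, e3, e4] at key
  exact key


lemma tsum_jensen {ι : Type*} {P : ℝ} (hP : 1 ≤ P) (w f : ι → ℝ≥0∞) :
    (∑' i, w i * f i) ^ P ≤ (∑' i, w i) ^ (P - 1) * ∑' i, w i * f i ^ P := by
  rcases eq_or_lt_of_le hP with h1 | h1
  · rw [← h1]; simp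
  have hP0 : (0:ℝ) < P := by linarith
  have h := tsum_holder h1 w f
  calc (∑' i, w i * f i) ^ P
      ≤ ((∑' i, w i) ^ (1 - 1/P) * (∑' i, w i * f i ^ P) ^ (1/P)) ^ P :=
        ENNReal.rpow_le_rpow h hP0.le
    _ = (∑' i, w i) ^ (P - 1) * ∑' i, w i * f i ^ P := by
        rw [ENNReal.mul_rpow_of_nonneg _ _ hP0.le, ← ENNReal.rpow_mul, ← ENNReal.rpow_mul]
        have e1 : (1 - 1/P) * P = P - 1 := by field_simp
        have e2 : (1/P) * P = 1 := by field_simp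
        rw [e1, e2, ENNReal.rpow_one]

lemma pow_rpow_comm (t : ℝ≥0∞) (j : ℕ) (R : ℝ) : (t ^ j) ^ R = (t ^ R) ^ j := by
  rw [← ENNReal.rpow_natCast t j, ← ENNReal.rpow_mul, mul_comm, ENNReal.rpow_mul,
    ENNReal.rpow_natCast]

lemma geom_sum_fin {CE t : ℝ≥0∞} (hCE : CE ≠ ∞) (ht : t < 1) :
    ∑' j : ℕ, CE * t ^ j ≠ ∞ := by
  rw [ENNReal.tsum_mul_left, ENNReal.tsum_geometric]
  exact ENNReal.mul_ne_top hCE (ENNReal.inv_ne_top.2 (tsub_pos_of_lt ht).ne')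

lemma geom_sum_fin_rpow {CE t : ℝ≥0∞} (hCE : CE ≠ ∞) (ht : t < 1) {R : ℝ} (hR : 0 < R) :
    ∑' j : ℕ, (CE * t ^ j) ^ R ≠ ∞ := by
  have h1 : ∀ j : ℕ, (CE * t ^ j) ^ R = CE ^ R * (t ^ R) ^ j := by
    intro j
    rw [ENNReal.mul_rpow_of_nonneg _ _ hR.le, pow_rpow_comm]
  simp only [h1]
  rw [ENNReal.tsum_mul_left, ENNReal.tsum_geometric]
  have htR : t ^ R < 1 := ENNReal.rpow_lt_one ht hR
  exact ENNReal.mul_ne_top (ENNReal.rpow_ne_top_of_nonneg hR.le hCE)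
    (ENNReal.inv_ne_top.2 (tsub_pos_of_lt htR).ne')

lemma le_sumPartG_one {r : ℝ≥0∞} (hr0 : r ≠ 0) (V : ℤ → ℝ≥0∞) (k : ℤ) :
    V k ≤ sumPartG r (fun _ => 1) V := by
  unfold sumPartG
  split_ifs with h
  · exact le_iSup V k
  have hR : 0 < r.toReal := ENNReal.toReal_pos hr0 h
  have : V k = ((V k) ^ r.toReal) ^ (1 / r.toReal) := by
    rw [← ENNReal.rpow_mul, mul_one_div, div_self hR.ne', ENNReal.rpow_one]
  rw [this]
  refine ENNReal.rpow_le_rpow ?_ (by positivity)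
  calc (V k) ^ r.toReal = 1 * (V k) ^ r.toReal := (one_mul _).symm
    _ ≤ _ := ENNReal.le_tsum k

lemma sumPartG_mono {ι : Type*} (r : ℝ≥0∞) (w : ι → ℝ≥0∞) {f g : ι → ℝ≥0∞}
    (h : ∀ i, f i ≤ g i) : sumPartG r w f ≤ sumPartG r w g := by
  unfold sumPartG
  split_ifs with hr
  · exact iSup_mono h
  refine ENNReal.rpow_le_rpow ?_ (by positivity)
  exact ENNReal.tsum_le_tsum fun i => mul_le_mul_right (ENNReal.rpow_le_rpow (h i)
    ENNReal.toReal_nonneg) _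

lemma conv_bound {r : ℝ≥0∞} (hr0 : r ≠ 0) {CE t : ℝ≥0∞} (hCE : CE ≠ ∞) (ht : t < 1) :
    ∃ CC : ℝ≥0∞, CC ≠ ∞ ∧ ∀ V V' : ℤ → ℝ≥0∞,
      (∀ k : ℤ, V k ≤ ∑' j : ℕ, (CE * t ^ j) * V' (k + (j:ℤ))) →
      sumPartG r (fun _ => 1) V ≤ CC * sumPartG r (fun _ => 1) V' := by
  by_cases hrtop : r = ∞
  · refine ⟨∑' j : ℕ, CE * t ^ j, geom_sum_fin hCE ht, fun V V' hV => ?_⟩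
    subst hrtop
    simp only [sumPartG, if_pos rfl]
    refine iSup_le fun k => (hV k).trans ?_
    rw [← ENNReal.tsum_mul_right]
    exact ENNReal.tsum_le_tsum fun j => mul_le_mul_right (le_iSup V' _) _
  have hR : 0 < r.toReal := ENNReal.toReal_pos hr0 hrtop
  set R := r.toReal with hRdef
  have hshift : ∀ (j : ℕ) (V' : ℤ → ℝ≥0∞), ∑' k : ℤ, (V' (k + (j:ℤ))) ^ R = ∑' k : ℤ, (V' k) ^ R :=
    fun j V' => (Equiv.addRight (j:ℤ)).tsum_eq (fun k => V' k ^ R)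
  have hsum_eq : ∀ V : ℤ → ℝ≥0∞, sumPartG r (fun _ => 1) V = (∑' k : ℤ, V k ^ R) ^ (1/R) := by
    intro V
    simp only [sumPartG, if_neg hrtop, one_mul, hRdef]
  rcases le_or_gt R 1 with hR1 | hR1
  · refine ⟨(∑' j : ℕ, (CE * t ^ j) ^ R) ^ (1/R),
      ENNReal.rpow_ne_top_of_nonneg (by positivity) (geom_sum_fin_rpow hCE ht hR), fun V V' hV => ?_⟩
    rw [hsum_eq, hsum_eq, ← ENNReal.mul_rpow_of_nonneg _ _ (by positivity : (0:ℝ) ≤ 1/R)]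
    refine ENNReal.rpow_le_rpow ?_ (by positivity)
    calc ∑' k : ℤ, V k ^ R
        ≤ ∑' k : ℤ, ∑' j : ℕ, ((CE * t ^ j) ^ R * (V' (k + (j:ℤ))) ^ R) := by
          refine ENNReal.tsum_le_tsum fun k => ?_
          refine (ENNReal.rpow_le_rpow (hV k) hR.le).trans ?_
          refine (tsum_rpow_le _ hR hR1).trans ?_
          exact ENNReal.tsum_le_tsum fun j => le_of_eq (ENNReal.mul_rpow_of_nonneg _ _ hR.le)
      _ = ∑' j : ℕ, (CE * t ^ j) ^ R * ∑' k : ℤ, (V' (k + (j:ℤ))) ^ R := by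
          rw [ENNReal.tsum_comm]
          exact tsum_congr fun j => ENNReal.tsum_mul_left
      _ = (∑' j : ℕ, (CE * t ^ j) ^ R) * ∑' k : ℤ, V' k ^ R := by
          rw [← ENNReal.tsum_mul_right]
          exact tsum_congr fun j => by rw [hshift]
  · set G : ℝ≥0∞ := ∑' j : ℕ, CE * t ^ j with hGdef
    have hGfin : G ≠ ∞ := geom_sum_fin hCE ht
    refine ⟨(G ^ (R - 1) * G) ^ (1/R),
      ENNReal.rpow_ne_top_of_nonneg (by positivity)
        (ENNReal.mul_ne_top (ENNReal.rpow_ne_top_of_nonneg (by linarith) hGfin) hGfin),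
      fun V V' hV => ?_⟩
    rw [hsum_eq, hsum_eq, ← ENNReal.mul_rpow_of_nonneg _ _ (by positivity : (0:ℝ) ≤ 1/R)]
    refine ENNReal.rpow_le_rpow ?_ (by positivity)
    calc ∑' k : ℤ, V k ^ R
        ≤ ∑' k : ℤ, (G ^ (R-1) * ∑' j : ℕ, (CE * t ^ j) * (V' (k + (j:ℤ))) ^ R) := by
          refine ENNReal.tsum_le_tsum fun k => ?_
          refine (ENNReal.rpow_le_rpow (hV k) hR.le).trans ?_
          exact tsum_jensen (ι := ℕ) hR1.le (fun j => CE * t ^ j) (fun j => V' (k + (j:ℤ)))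
      _ = G ^ (R-1) * ∑' j : ℕ, (CE * t ^ j) * ∑' k : ℤ, (V' (k + (j:ℤ))) ^ R := by
          rw [ENNReal.tsum_mul_left, ENNReal.tsum_comm]
          congr 1
          exact tsum_congr fun j => ENNReal.tsum_mul_left
      _ = (G ^ (R-1) * G) * ∑' k : ℤ, V' k ^ R := by
          rw [mul_assoc]
          congr 1
          rw [← ENNReal.tsum_mul_right]
          exact tsum_congr fun j => by rw [hshift]

section Geom
variable {Z : Type*} [MetricSpace Z] [MeasurableSpace Z] [BorelSpace Z]
  {μ : Measure Z} {C Q : ℝ} {X : Type*} {ξ : X → Z} {lvl : X → ℤ}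

structure Hyp (μ : Measure Z) (C Q : ℝ) (ξ : X → Z) (lvl : X → ℤ) : Prop where
  hC : 1 ≤ C
  hQ : 0 < Q
  hdoub : ∀ (ζ : Z) (r lam : ℝ), 0 < r → 1 ≤ lam →
      μ (Metric.ball ζ (lam * r)) ≤ ENNReal.ofReal (C * lam ^ Q) * μ (Metric.ball ζ r)
  hpos : ∀ (ζ : Z) (r : ℝ), 0 < r → 0 < μ (Metric.ball ζ r)
  hfin : ∀ (ζ : Z) (r : ℝ), μ (Metric.ball ζ r) < ∞
  hsep : ∀ x y : X, x ≠ y → lvl x = lvl y → (2:ℝ) ^ (-lvl x - 1) ≤ dist (ξ x) (ξ y)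

lemma mB_pos (H : Hyp μ C Q ξ lvl) (x : X) : 0 < μ (vBall ξ lvl x) :=
  H.hpos _ _ (zpow_pos two_pos _)

lemma mB_fin (H : Hyp μ C Q ξ lvl) (x : X) : μ (vBall ξ lvl x) < ∞ := H.hfin _ _

lemma ball_le (H : Hyp μ C Q ξ lvl) (ζ ζ' : Z) (r r' lam : ℝ) (hr : 0 < r) (hlam : 1 ≤ lam)
    (h : dist ζ' ζ + r' ≤ lam * r) :
    μ (Metric.ball ζ' r') ≤ ENNReal.ofReal (C * lam ^ Q) * μ (Metric.ball ζ r) := by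
  refine le_trans (measure_mono ?_) (H.hdoub ζ r lam hr hlam)
  intro w hw
  rw [Metric.mem_ball] at hw ⊢
  calc dist w ζ ≤ dist w ζ' + dist ζ' ζ := dist_triangle _ _ _
    _ < r' + dist ζ' ζ := by linarith
    _ ≤ lam * r := by linarith

lemma dist_center_lt {x y : X} (hxy : (vBall ξ lvl y ∩ vBall ξ lvl x).Nonempty) :
    dist (ξ x) (ξ y) < (2:ℝ) ^ (-lvl x) + (2:ℝ) ^ (-lvl y) := by
  obtain ⟨w, hw1, hw2⟩ := hxy
  rw [vBall, Metric.mem_ball] at hw1 hw2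
  calc dist (ξ x) (ξ y) ≤ dist w (ξ x) + dist w (ξ y) := dist_triangle_left _ _ _
    _ < (2:ℝ) ^ (-lvl x) + (2:ℝ) ^ (-lvl y) := by linarith

lemma two_zpow_mono {a b : ℤ} (h : a ≤ b) : (2:ℝ) ^ (-b) ≤ (2:ℝ) ^ (-a) :=
  zpow_le_zpow_right₀ one_le_two (by omega)

/-- Main counting lemma for separated sets. -/
lemma sep_count (H : Hyp μ C Q ξ lvl) (z : Z) (δ R : ℝ) (hδ : 0 < δ) (S : Set Z)
    (hsep' : ∀ a ∈ S, ∀ b ∈ S, a ≠ b → δ ≤ dist a b) (hsub : S ⊆ Metric.ball z R) :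
    S.Finite ∧ ∀ F : Finset Z, ↑F ⊆ S →
      (F.card : ℝ≥0∞) ≤ ENNReal.ofReal (C * ((4*R+2*δ)/δ) ^ Q) := by
  rcases S.eq_empty_or_nonempty with rfl | ⟨a0, ha0⟩
  · refine ⟨Set.finite_empty, fun F hF => ?_⟩
    have hFe : F = ∅ := Finset.eq_empty_of_forall_notMem fun a ha => (hF ha).elim
    simp [hFe]
  have hR0 : 0 < R := by
    have h1 := hsub ha0
    rw [Metric.mem_ball] at h1
    exact dist_nonneg.trans_lt h1
  have hlam : 1 ≤ (4*R+2*δ)/δ := by rw [le_div_iff₀ hδ]; linarith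
  set K := ENNReal.ofReal (C * ((4*R+2*δ)/δ) ^ Q) with hK
  have hcard : ∀ F : Finset Z, ↑F ⊆ S → (F.card : ℝ≥0∞) ≤ K := by
    intro F hF
    have hdisj : (↑F : Set Z).PairwiseDisjoint (fun a => Metric.ball a (δ/2)) := by
      intro a ha b hb hab
      exact Metric.ball_disjoint_ball
        (by linarith [hsep' a (hF ha) b (hF hb) hab] : δ/2 + δ/2 ≤ dist a b)
    have hmeas : μ (⋃ a ∈ F, Metric.ball a (δ/2)) = ∑ a ∈ F, μ (Metric.ball a (δ/2)) :=
      measure_biUnion_finset hdisj fun b _ => measurableSet_ball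
    have hsub2 : (⋃ a ∈ F, Metric.ball a (δ/2)) ⊆ Metric.ball z (R + δ) := by
      intro w hw
      simp only [Set.mem_iUnion] at hw
      obtain ⟨a, haF, hw⟩ := hw
      rw [Metric.mem_ball] at hw ⊢
      have h1 : dist a z < R := by
        have := hsub (hF haF); rwa [Metric.mem_ball] at this
      calc dist w z ≤ dist w a + dist a z := dist_triangle _ _ _
        _ < R + δ := by linarith
    have hlow : ∀ a ∈ F, μ (Metric.ball z (R + δ)) ≤ K * μ (Metric.ball a (δ/2)) := by
      intro a haF
      refine ball_le H a z (δ/2) (R+δ) ((4*R+2*δ)/δ) (by linarith) hlam ?_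
      have h1 : dist z a < R := by
        have := hsub (hF haF); rw [Metric.mem_ball] at this; rwa [dist_comm]
      have h2 : (4*R+2*δ)/δ * (δ/2) = 2*R + δ := by field_simp; ring
      rw [h2]; linarith
    have hmain : (F.card : ℝ≥0∞) * μ (Metric.ball z (R+δ)) ≤ K * μ (Metric.ball z (R+δ)) := by
      calc (F.card : ℝ≥0∞) * μ (Metric.ball z (R+δ)) = ∑ _a ∈ F, μ (Metric.ball z (R+δ)) := by
            rw [Finset.sum_const, nsmul_eq_mul]
        _ ≤ ∑ a ∈ F, K * μ (Metric.ball a (δ/2)) := Finset.sum_le_sum hlow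
        _ = K * ∑ a ∈ F, μ (Metric.ball a (δ/2)) := by rw [Finset.mul_sum]
        _ = K * μ (⋃ a ∈ F, Metric.ball a (δ/2)) := by rw [hmeas]
        _ ≤ K * μ (Metric.ball z (R+δ)) := mul_le_mul_right (measure_mono hsub2) _
    exact (ENNReal.mul_le_mul_iff_left (H.hpos z (R+δ) (by linarith)).ne'
      (H.hfin z (R+δ)).ne).1 hmain
  refine ⟨?_, hcard⟩
  by_contra hinf
  obtain ⟨F, hFS, hFcard⟩ :=
    Set.Infinite.exists_subset_card_eq hinf (⌈C * ((4*R+2*δ)/δ)^Q⌉₊ + 1)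
  have h2 := hcard F hFS
  rw [hFcard] at h2
  have h3 : K ≤ ((⌈C * ((4*R+2*δ)/δ)^Q⌉₊ : ℕ) : ℝ≥0∞) := by
    rw [hK, ← ENNReal.ofReal_natCast]
    exact ENNReal.ofReal_le_ofReal (Nat.le_ceil _)
  have h4 := h2.trans h3
  rw [Nat.cast_le] at h4
  omega

lemma set_count (H : Hyp μ C Q ξ lvl) (m : ℤ) (z : Z) (R : ℝ) (A : Set X)
    (hlvl : ∀ y ∈ A, lvl y = m) (hball : ∀ y ∈ A, ξ y ∈ Metric.ball z R) :
    A.Finite ∧ (Nat.card A : ℝ≥0∞) ≤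
      ENNReal.ofReal (C * ((4*R+2*(2:ℝ)^(-m-1))/((2:ℝ)^(-m-1)))^Q) := by
  have hδ : (0:ℝ) < (2:ℝ)^(-m-1) := zpow_pos two_pos _
  have hinj : Set.InjOn ξ A := by
    intro a ha b hb hab
    by_contra hne
    have h1 := H.hsep a b hne ((hlvl a ha).trans (hlvl b hb).symm)
    rw [hlvl a ha, hab, dist_self] at h1
    linarith
  have hsep' : ∀ a ∈ ξ '' A, ∀ b ∈ ξ '' A, a ≠ b → (2:ℝ)^(-m-1) ≤ dist a b := by
    rintro _ ⟨a, ha, rfl⟩ _ ⟨b, hb, rfl⟩ hne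
    have hne' : a ≠ b := fun h => hne (by rw [h])
    have h1 := H.hsep a b hne' ((hlvl a ha).trans (hlvl b hb).symm)
    rwa [hlvl a ha] at h1
  have hsub : ξ '' A ⊆ Metric.ball z R := by rintro _ ⟨a, ha, rfl⟩; exact hball a ha
  obtain ⟨hfin, hcard⟩ := sep_count H z ((2:ℝ)^(-m-1)) R hδ (ξ '' A) hsep' hsub
  have hAfin : A.Finite := Set.Finite.of_finite_image hfin hinj
  refine ⟨hAfin, ?_⟩
  have h5 : Nat.card A = (ξ '' A).ncard := by
    rw [Set.ncard_image_of_injOn hinj, Nat.card_coe_set_eq]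
  rw [h5, Set.ncard_eq_toFinset_card _ hfin]
  exact hcard hfin.toFinset (by simp)

end Geom

section Op
variable {Z : Type*} [MetricSpace Z] [MeasurableSpace Z] [BorelSpace Z]
  {μ : Measure Z} {C Q : ℝ} {X : Type*} {ξ : X → Z} {lvl : X → ℤ}

/-- Powers of two in `ℝ≥0∞`. -/
def E2 (a : ℝ) : ℝ≥0∞ := (2:ℝ≥0∞) ^ a

lemma E2_ne_zero (a : ℝ) : E2 a ≠ 0 := (ENNReal.rpow_pos two_pos ENNReal.ofNat_ne_top).ne'

lemma E2_ne_top (a : ℝ) : E2 a ≠ ∞ := by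
  simp [E2, ENNReal.rpow_eq_top_iff]

lemma E2_add (a b : ℝ) : E2 (a + b) = E2 a * E2 b :=
  ENNReal.rpow_add a b two_ne_zero ENNReal.ofNat_ne_top

lemma E2_pow (a : ℝ) (j : ℕ) : (E2 a) ^ j = E2 ((j:ℝ) * a) := by
  rw [E2, E2, ← ENNReal.rpow_natCast ((2:ℝ≥0∞)^a) j, ← ENNReal.rpow_mul, mul_comm]

lemma E2_lt_one {a : ℝ} (ha : a < 0) : E2 a < 1 := by
  have := ENNReal.rpow_lt_rpow_of_exponent_lt (x := 2) one_lt_two ENNReal.ofNat_ne_top ha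
  simpa [E2] using this

lemma E2_rpow (a b : ℝ) : (E2 a) ^ b = E2 (a * b) := by
  rw [E2, E2, ← ENNReal.rpow_mul]

lemma ofReal_two_rpow (a : ℝ) : ENNReal.ofReal ((2:ℝ) ^ a) = E2 a := by
  rw [E2, ← ENNReal.ofReal_rpow_of_pos two_pos]
  norm_num

/-- index types -/
def Lk (lvl : X → ℤ) (k : ℤ) := {x : X // lvl x = k}

def Yj (ξ : X → Z) (lvl : X → ℤ) (x : X) (j : ℕ) :=
  {y : X // lvl y = lvl x + (j:ℤ) ∧ (vBall ξ lvl y ∩ vBall ξ lvl x).Nonempty}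

def Nset (ξ : X → Z) (lvl : X → ℤ) (k : ℤ) (y : X) : Set X :=
  {x : X | lvl x = k ∧ (vBall ξ lvl y ∩ vBall ξ lvl x).Nonempty}

def Dom (ξ : X → Z) (lvl : X → ℤ) (x : X) :=
  {y : X // lvl x ≤ lvl y ∧ (vBall ξ lvl y ∩ vBall ξ lvl x).Nonempty}

/-- the `ℝ≥0∞`-valued averaging operator -/
def SgE (μ : Measure Z) (ξ : X → Z) (lvl : X → ℤ) (g : X → ℝ≥0∞) (x : X) : ℝ≥0∞ :=
  ∑' y : Dom ξ lvl x, (μ (vBall ξ lvl y.1) / μ (vBall ξ lvl x)) * g y.1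

def SjE (μ : Measure Z) (ξ : X → Z) (lvl : X → ℤ) (g : X → ℝ≥0∞) (x : X) (j : ℕ) : ℝ≥0∞ :=
  ∑' y : Yj ξ lvl x j, (μ (vBall ξ lvl y.1) / μ (vBall ξ lvl x)) * g y.1

def AE (μ : Measure Z) (ξ : X → Z) (lvl : X → ℤ) (P : ℝ) (k : ℤ) (g : X → ℝ≥0∞) : ℝ≥0∞ :=
  ∑' x : Lk lvl k, μ (vBall ξ lvl x.1) * g x.1 ^ P

def AI (lvl : X → ℤ) (k : ℤ) (g : X → ℝ≥0∞) : ℝ≥0∞ := ⨆ x : Lk lvl k, g x.1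

lemma SgE_eq (g : X → ℝ≥0∞) (x : X) :
    SgE μ ξ lvl g x = ∑' j : ℕ, SjE μ ξ lvl g x j := by
  let e : Dom ξ lvl x ≃ Σ j : ℕ, Yj ξ lvl x j :=
    { toFun := fun y => ⟨(lvl y.1 - lvl x).toNat, ⟨y.1, ⟨by have := y.2.1; omega, y.2.2⟩⟩⟩
      invFun := fun σ => ⟨σ.2.1, ⟨by have := σ.2.2.1; omega, σ.2.2.2⟩⟩
      left_inv := fun ⟨y, hy⟩ => rfl
      right_inv := by
        rintro ⟨j, y, hy1, hy2⟩
        have hj : (lvl y - lvl x).toNat = j := by omega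
        subst hj
        rfl }
  have h1 : SgE μ ξ lvl g x = ∑' σ : Σ j : ℕ, Yj ξ lvl x j,
      (μ (vBall ξ lvl σ.2.1) / μ (vBall ξ lvl x)) * g σ.2.1 := by
    rw [SgE]
    rw [← e.symm.tsum_eq (fun y : Dom ξ lvl x =>
      (μ (vBall ξ lvl y.1) / μ (vBall ξ lvl x)) * g y.1)]
    exact tsum_congr fun σ => rfl
  rw [h1]
  exact ENNReal.tsum_sigma'
    (fun σ : Σ j : ℕ, Yj ξ lvl x j => (μ (vBall ξ lvl σ.2.1) / μ (vBall ξ lvl x)) * g σ.2.1)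

lemma tsum_swap (k : ℤ) (j : ℕ) (F : X → X → ℝ≥0∞) :
    ∑' (x : Lk lvl k), ∑' (y : Yj ξ lvl x.1 j), F x.1 y.1
      = ∑' (y : Lk lvl (k + j)), ∑' (x : Nset ξ lvl k y.1), F x.1 y.1 := by
  let e : (Σ x : Lk lvl k, Yj ξ lvl x.1 j) ≃ (Σ y : Lk lvl (k + j), Nset ξ lvl k y.1) :=
    { toFun := fun σ => ⟨⟨σ.2.1, by
        have h1 := σ.2.2.1; have h2 := σ.1.2
        show lvl (σ.2.1 : X) = k + (j:ℤ); omega⟩,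
        ⟨σ.1.1, ⟨σ.1.2, σ.2.2.2⟩⟩⟩
      invFun := fun σ => ⟨⟨σ.2.1, σ.2.2.1⟩,
        ⟨σ.1.1, ⟨by
          have h1 := σ.1.2; have h2 := σ.2.2.1
          show lvl (σ.1.1 : X) = lvl (σ.2.1 : X) + (j:ℤ); omega, σ.2.2.2⟩⟩⟩
      left_inv := fun ⟨⟨a, ha⟩, ⟨b, hb⟩⟩ => rfl
      right_inv := fun ⟨⟨a, ha⟩, ⟨b, hb⟩⟩ => rfl }
  have h1 := (ENNReal.tsum_sigma'
    (fun σ : Σ x : Lk lvl k, Yj ξ lvl x.1 j => F σ.1.1 σ.2.1)).symm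
  have h2 := e.tsum_eq (fun τ : Σ y : Lk lvl (k + j), Nset ξ lvl k y.1 => F τ.2.1 τ.1.1)
  have h3 := ENNReal.tsum_sigma'
    (fun τ : Σ y : Lk lvl (k + j), Nset ξ lvl k y.1 => F τ.2.1 τ.1.1)
  calc ∑' (x : Lk lvl k), ∑' (y : Yj ξ lvl x.1 j), F x.1 y.1
      = ∑' σ : Σ x : Lk lvl k, Yj ξ lvl x.1 j, F σ.1.1 σ.2.1 := h1
    _ = ∑' τ : Σ y : Lk lvl (k + j), Nset ξ lvl k y.1, F τ.2.1 τ.1.1 := by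
        rw [← h2]; exact tsum_congr fun σ => rfl
    _ = _ := h3

end Op

section Op2
variable {Z : Type*} [MetricSpace Z] [MeasurableSpace Z] [BorelSpace Z]
  {μ : Measure Z} {C Q : ℝ} {X : Type*} {ξ : X → Z} {lvl : X → ℤ}

/-- comparison `μB(x) ≤ C4^Q (2^Q)^j μB(y)` for `y` at level `lvl x + j` meeting `B(x)`. -/
lemma mB_le' (H : Hyp μ C Q ξ lvl) {x y : X} {j : ℕ} (hl : lvl y = lvl x + (j:ℤ))
    (hint : (vBall ξ lvl y ∩ vBall ξ lvl x).Nonempty) :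
    μ (vBall ξ lvl x) ≤
      ENNReal.ofReal (C * 4 ^ Q) * (ENNReal.ofReal ((2:ℝ) ^ Q)) ^ j * μ (vBall ξ lvl y) := by
  have h2j : (1:ℝ) ≤ 2 ^ j := one_le_pow₀ one_le_two
  have h1 : μ (vBall ξ lvl x) ≤ ENNReal.ofReal (C * ((4:ℝ) * 2 ^ j) ^ Q) * μ (vBall ξ lvl y) := by
    refine ball_le H (ξ y) (ξ x) ((2:ℝ)^(-lvl y)) ((2:ℝ)^(-lvl x)) ((4:ℝ) * 2 ^ j)
      (zpow_pos two_pos _) (by linarith) ?_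
    have hd := dist_center_lt hint
    have hyx : (2:ℝ)^(-lvl y) ≤ 2^(-lvl x) := two_zpow_mono (by omega)
    have he : (4:ℝ) * 2 ^ j * 2 ^ (-lvl y) = 4 * 2 ^ (-lvl x) := by
      have h2 : (2:ℝ)^(j:ℤ) * 2^(-(lvl x + (j:ℤ))) = 2^(-lvl x) := by
        rw [← zpow_add₀ (two_ne_zero : (2:ℝ) ≠ 0)]
        congr 1
        ring
      rw [hl, ← h2, zpow_natCast]
      ring
    rw [he]
    have hpos0 : (0:ℝ) < 2^(-lvl x) := zpow_pos two_pos _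
    linarith
  refine h1.trans (le_of_eq ?_)
  congr 1
  rw [← ENNReal.ofReal_pow (Real.rpow_nonneg (by norm_num) Q),
    ← ENNReal.ofReal_mul (mul_nonneg (le_trans zero_le_one H.hC) (Real.rpow_nonneg (by norm_num) Q))]
  congr 1
  rw [Real.mul_rpow (by norm_num) (by positivity)]
  have h3 : ((2:ℝ)^j)^Q = ((2:ℝ)^Q)^j := by
    rw [← Real.rpow_natCast (2:ℝ) j, ← Real.rpow_mul (by norm_num), mul_comm,
      Real.rpow_mul (by norm_num), Real.rpow_natCast]
  rw [h3]
  ring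

/-- bounded overlap: sum of measures of the level-`lvl x + j` balls meeting `B(x)`. -/
lemma sumYj (H : Hyp μ C Q ξ lvl) (x : X) (j : ℕ) :
    ∑' y : Yj ξ lvl x j, μ (vBall ξ lvl y.1)
      ≤ (ENNReal.ofReal (C * 4 ^ Q) * ENNReal.ofReal (C * 3 ^ Q)) * μ (vBall ξ lvl x) := by
  have hmle : ∀ y : Yj ξ lvl x j, μ (vBall ξ lvl y.1) ≤
      ENNReal.ofReal (C * 4 ^ Q) * μ (Metric.ball (ξ y.1) ((2:ℝ)^(-lvl y.1 - 2))) := by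
    intro y
    refine ball_le H (ξ y.1) (ξ y.1) ((2:ℝ)^(-lvl y.1 - 2)) ((2:ℝ)^(-lvl y.1)) 4
      (zpow_pos two_pos _) (by norm_num) ?_
    rw [dist_self]
    have h2 : (4:ℝ) * 2^(-lvl y.1 - 2) = 2^(-lvl y.1) := by
      have : (2:ℝ)^(2:ℤ) * 2^(-lvl y.1 - 2) = 2^(-lvl y.1) := by
        rw [← zpow_add₀ (two_ne_zero : (2:ℝ) ≠ 0)]
        congr 1
        ring
      rw [← this]
      norm_num
    rw [h2]
    linarith [zpow_pos (two_pos : (0:ℝ) < 2) (-lvl y.1)]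
  have hdisjsum : ∑' y : Yj ξ lvl x j, μ (Metric.ball (ξ y.1) ((2:ℝ)^(-lvl y.1 - 2)))
      ≤ μ (Metric.ball (ξ x) (3 * (2:ℝ)^(-lvl x))) := by
    rw [ENNReal.tsum_eq_iSup_sum]
    refine iSup_le fun F => ?_
    have hdisj : (↑F : Set (Yj ξ lvl x j)).PairwiseDisjoint
        (fun y : Yj ξ lvl x j => Metric.ball (ξ y.1) ((2:ℝ)^(-lvl y.1 - 2))) := by
      intro a _ b _ hab
      have hne : a.1 ≠ b.1 := fun h => hab (Subtype.ext h)
      have hll : lvl a.1 = lvl b.1 := by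
        have h1 := a.2.1; have h2 := b.2.1; omega
      have hd := H.hsep a.1 b.1 hne hll
      refine Metric.ball_disjoint_ball ?_
      have h3 : (2:ℝ)^(-lvl a.1 - 2) + 2^(-lvl b.1 - 2) ≤ 2^(-lvl a.1 - 1) := by
        rw [← hll]
        have : (2:ℝ)^(-lvl a.1 - 1) = 2^(-lvl a.1 - 2) + 2^(-lvl a.1 - 2) := by
          rw [← two_mul]
          rw [show (-lvl a.1 - 1) = 1 + (-lvl a.1 - 2) by ring,
            zpow_add₀ (two_ne_zero : (2:ℝ) ≠ 0)]
          norm_num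
        linarith [this.le]
      linarith
    have hmeas : μ (⋃ y ∈ F, Metric.ball (ξ (y:Yj ξ lvl x j).1) ((2:ℝ)^(-lvl y.1 - 2)))
        = ∑ y ∈ F, μ (Metric.ball (ξ y.1) ((2:ℝ)^(-lvl y.1 - 2))) :=
      measure_biUnion_finset hdisj fun _ _ => measurableSet_ball
    rw [← hmeas]
    refine measure_mono ?_
    intro w hw
    simp only [Set.mem_iUnion] at hw
    obtain ⟨y, _, hw⟩ := hw
    rw [Metric.mem_ball] at hw ⊢
    have hd := dist_center_lt y.2.2
    have hj1 : (2:ℝ)^(-lvl y.1) ≤ 2^(-lvl x) := two_zpow_mono (by have := y.2.1; omega)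
    have hj2 : (2:ℝ)^(-lvl y.1 - 2) ≤ 2^(-lvl x) :=
      le_trans (zpow_le_zpow_right₀ one_le_two (by omega)) hj1
    calc dist w (ξ x) ≤ dist w (ξ y.1) + dist (ξ y.1) (ξ x) := dist_triangle _ _ _
      _ < 2^(-lvl y.1 - 2) + ((2:ℝ)^(-lvl x) + 2^(-lvl y.1)) := by
          rw [dist_comm (ξ y.1) (ξ x)]
          linarith
      _ ≤ 3 * 2^(-lvl x) := by linarith
  have hbig : μ (Metric.ball (ξ x) (3 * (2:ℝ)^(-lvl x)))
      ≤ ENNReal.ofReal (C * 3 ^ Q) * μ (vBall ξ lvl x) := by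
    refine ball_le H (ξ x) (ξ x) ((2:ℝ)^(-lvl x)) (3 * (2:ℝ)^(-lvl x)) 3
      (zpow_pos two_pos _) (by norm_num) ?_
    rw [dist_self]
    linarith
  calc ∑' y : Yj ξ lvl x j, μ (vBall ξ lvl y.1)
      ≤ ∑' y : Yj ξ lvl x j, ENNReal.ofReal (C * 4 ^ Q)
          * μ (Metric.ball (ξ y.1) ((2:ℝ)^(-lvl y.1 - 2))) := ENNReal.tsum_le_tsum hmle
    _ = ENNReal.ofReal (C * 4 ^ Q)
          * ∑' y : Yj ξ lvl x j, μ (Metric.ball (ξ y.1) ((2:ℝ)^(-lvl y.1 - 2))) :=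
        ENNReal.tsum_mul_left
    _ ≤ ENNReal.ofReal (C * 4 ^ Q) * μ (Metric.ball (ξ x) (3 * (2:ℝ)^(-lvl x))) :=
        mul_le_mul_right hdisjsum _
    _ ≤ ENNReal.ofReal (C * 4 ^ Q) * (ENNReal.ofReal (C * 3 ^ Q) * μ (vBall ξ lvl x)) :=
        mul_le_mul_right hbig _
    _ = _ := by ring

lemma sumYj_div (H : Hyp μ C Q ξ lvl) (x : X) (j : ℕ) :
    ∑' y : Yj ξ lvl x j, μ (vBall ξ lvl y.1) / μ (vBall ξ lvl x)
      ≤ ENNReal.ofReal (C * 4 ^ Q) * ENNReal.ofReal (C * 3 ^ Q) := by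
  have h1 : ∑' y : Yj ξ lvl x j, μ (vBall ξ lvl y.1) / μ (vBall ξ lvl x)
      = (∑' y : Yj ξ lvl x j, μ (vBall ξ lvl y.1)) / μ (vBall ξ lvl x) := by
    simp only [div_eq_mul_inv]
    exact ENNReal.tsum_mul_right
  rw [h1, ENNReal.div_le_iff (mB_pos H x).ne' (mB_fin H x).ne]
  exact sumYj H x j

lemma Nset_card (H : Hyp μ C Q ξ lvl) {k : ℤ} {y : X} (hy : k ≤ lvl y) :
    (Nset ξ lvl k y).Finite ∧
      (Nat.card (Nset ξ lvl k y) : ℝ≥0∞) ≤ ENNReal.ofReal (C * 18 ^ Q) := by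
  have hδ : (0:ℝ) < (2:ℝ)^(-k-1) := zpow_pos two_pos _
  have hball : ∀ x ∈ Nset ξ lvl k y, ξ x ∈ Metric.ball (ξ y) ((2:ℝ)^(-k+1)) := by
    intro x hx
    rw [Metric.mem_ball]
    have hd := dist_center_lt hx.2
    have h1 : (2:ℝ)^(-lvl y) ≤ 2^(-k) := two_zpow_mono hy
    have h2 : (2:ℝ)^(-k+1) = 2^(-k) + 2^(-k) := by
      rw [← two_mul, show (-k+1) = 1 + -k by ring, zpow_add₀ (two_ne_zero : (2:ℝ) ≠ 0)]
      norm_num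
    rw [hx.1] at hd
    rw [h2]
    linarith
  obtain ⟨hfin, hcard⟩ := set_count H k (ξ y) ((2:ℝ)^(-k+1)) (Nset ξ lvl k y)
    (fun x hx => hx.1) hball
  refine ⟨hfin, hcard.trans (le_of_eq ?_)⟩
  congr 1
  have e1 : (2:ℝ)^(-k+1) = 4 * (2:ℝ)^(-k-1) := by
    rw [show (-k+1) = 2 + (-k-1) by ring, zpow_add₀ (two_ne_zero : (2:ℝ) ≠ 0)]
    norm_num
  rw [e1]
  congr 2
  field_simp
  ring

lemma tsum_const_le_card {A : Set X} (hA : A.Finite) {K : ℝ≥0∞}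
    (hK : (Nat.card A : ℝ≥0∞) ≤ K) (c : ℝ≥0∞) : ∑' _ : A, c ≤ K * c := by
  have := hA.fintype
  rw [tsum_fintype, Finset.sum_const, Finset.card_univ, nsmul_eq_mul]
  refine mul_le_mul_left ?_ c
  rw [← Nat.card_eq_fintype_card]
  exact hK

end Op2

section Op3
variable {Z : Type*} [MetricSpace Z] [MeasurableSpace Z] [BorelSpace Z]
  {μ : Measure Z} {C Q : ℝ} {X : Type*} {ξ : X → Z} {lvl : X → ℤ}

def K3c (C Q : ℝ) : ℝ≥0∞ := ENNReal.ofReal (C * 4 ^ Q) * ENNReal.ofReal (C * 3 ^ Q)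
def NCc (C Q : ℝ) : ℝ≥0∞ := ENNReal.ofReal (C * 18 ^ Q)
def M2c (C Q : ℝ) : ℝ≥0∞ := ENNReal.ofReal (C * 4 ^ Q)
def bQc (Q : ℝ) : ℝ≥0∞ := ENNReal.ofReal ((2:ℝ) ^ Q)

lemma K3c_ne_top : K3c C Q ≠ ∞ := ENNReal.mul_ne_top ENNReal.ofReal_ne_top ENNReal.ofReal_ne_top
lemma NCc_ne_top : NCc C Q ≠ ∞ := ENNReal.ofReal_ne_top
lemma M2c_ne_top : M2c C Q ≠ ∞ := ENNReal.ofReal_ne_top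

lemma levelP_ge1 (H : Hyp μ C Q ξ lvl) {P : ℝ} (hP : 1 ≤ P) (k : ℤ) (j : ℕ) (g : X → ℝ≥0∞) :
    AE μ ξ lvl P k (fun x => SjE μ ξ lvl g x j)
      ≤ (K3c C Q) ^ (P-1) * (NCc C Q * AE μ ξ lvl P (k + j) g) := by
  have hstep : ∀ x : Lk lvl k,
      μ (vBall ξ lvl x.1) * (SjE μ ξ lvl g x.1 j) ^ P
        ≤ (K3c C Q) ^ (P-1) * ∑' y : Yj ξ lvl x.1 j, μ (vBall ξ lvl y.1) * g y.1 ^ P := by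
    intro x
    have hJ := tsum_jensen hP
      (fun y : Yj ξ lvl x.1 j => μ (vBall ξ lvl y.1) / μ (vBall ξ lvl x.1)) (fun y => g y.1)
    have h2 : (∑' y : Yj ξ lvl x.1 j, μ (vBall ξ lvl y.1) / μ (vBall ξ lvl x.1)) ^ (P-1)
        ≤ (K3c C Q) ^ (P-1) := by
      refine ENNReal.rpow_le_rpow ?_ (by linarith)
      exact sumYj_div H x.1 j
    calc μ (vBall ξ lvl x.1) * (SjE μ ξ lvl g x.1 j) ^ P
        ≤ μ (vBall ξ lvl x.1) *
            ((∑' y : Yj ξ lvl x.1 j, μ (vBall ξ lvl y.1) / μ (vBall ξ lvl x.1)) ^ (P-1) *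
             ∑' y : Yj ξ lvl x.1 j, (μ (vBall ξ lvl y.1) / μ (vBall ξ lvl x.1)) * g y.1 ^ P) :=
          mul_le_mul_right hJ _
      _ ≤ μ (vBall ξ lvl x.1) * ((K3c C Q) ^ (P-1) *
             ∑' y : Yj ξ lvl x.1 j, (μ (vBall ξ lvl y.1) / μ (vBall ξ lvl x.1)) * g y.1 ^ P) :=
          mul_le_mul_right (mul_le_mul_left h2 _) _
      _ = (K3c C Q) ^ (P-1) * (μ (vBall ξ lvl x.1) *
             ∑' y : Yj ξ lvl x.1 j, (μ (vBall ξ lvl y.1) / μ (vBall ξ lvl x.1)) * g y.1 ^ P) := by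
          ring
      _ = (K3c C Q) ^ (P-1) * ∑' y : Yj ξ lvl x.1 j, μ (vBall ξ lvl y.1) * g y.1 ^ P := by
          congr 1
          rw [← ENNReal.tsum_mul_left]
          refine tsum_congr fun y => ?_
          rw [← mul_assoc, ENNReal.mul_div_cancel (mB_pos H x.1).ne' (mB_fin H x.1).ne]
  calc AE μ ξ lvl P k (fun x => SjE μ ξ lvl g x j)
      ≤ ∑' x : Lk lvl k, (K3c C Q) ^ (P-1) *
          ∑' y : Yj ξ lvl x.1 j, μ (vBall ξ lvl y.1) * g y.1 ^ P :=
        ENNReal.tsum_le_tsum hstep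
    _ = (K3c C Q) ^ (P-1) * ∑' (x : Lk lvl k), ∑' (y : Yj ξ lvl x.1 j),
          μ (vBall ξ lvl y.1) * g y.1 ^ P := ENNReal.tsum_mul_left
    _ = (K3c C Q) ^ (P-1) * ∑' (y : Lk lvl (k + j)), ∑' (_ : Nset ξ lvl k y.1),
          μ (vBall ξ lvl y.1) * g y.1 ^ P := by
        rw [tsum_swap k j (fun _ y => μ (vBall ξ lvl y) * g y ^ P)]
    _ ≤ (K3c C Q) ^ (P-1) * (NCc C Q * AE μ ξ lvl P (k + j) g) := by
        refine mul_le_mul_right ?_ _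
        calc ∑' (y : Lk lvl (k + j)), ∑' (_ : Nset ξ lvl k y.1),
              μ (vBall ξ lvl y.1) * g y.1 ^ P
            ≤ ∑' (y : Lk lvl (k + j)), NCc C Q * (μ (vBall ξ lvl y.1) * g y.1 ^ P) := by
              refine ENNReal.tsum_le_tsum fun y => ?_
              have hy : k ≤ lvl y.1 := by have := y.2; omega
              exact tsum_const_le_card (Nset_card H hy).1 (Nset_card H hy).2 _
          _ = NCc C Q * AE μ ξ lvl P (k + j) g := ENNReal.tsum_mul_left

lemma levelP_le1 (H : Hyp μ C Q ξ lvl) {P : ℝ} (hP0 : 0 < P) (hP1 : P ≤ 1) (k : ℤ) (j : ℕ)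
    (g : X → ℝ≥0∞) :
    AE μ ξ lvl P k (fun x => SjE μ ξ lvl g x j)
      ≤ (M2c C Q * bQc Q ^ j) ^ (1-P) * (NCc C Q * AE μ ξ lvl P (k + j) g) := by
  have hstep : ∀ x : Lk lvl k,
      μ (vBall ξ lvl x.1) * (SjE μ ξ lvl g x.1 j) ^ P
        ≤ ∑' y : Yj ξ lvl x.1 j,
            (M2c C Q * bQc Q ^ j) ^ (1-P) * (μ (vBall ξ lvl y.1) * g y.1 ^ P) := by
    intro x
    have hkey : ∀ y : Yj ξ lvl x.1 j,
        μ (vBall ξ lvl x.1) * ((μ (vBall ξ lvl y.1) / μ (vBall ξ lvl x.1)) * g y.1) ^ P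
          ≤ (M2c C Q * bQc Q ^ j) ^ (1-P) * (μ (vBall ξ lvl y.1) * g y.1 ^ P) := by
      intro y
      have hx0 := (mB_pos H x.1).ne'
      have hxt := (mB_fin H x.1).ne
      have hy0 := (mB_pos H y.1).ne'
      have hyt := (mB_fin H y.1).ne
      have e1 : μ (vBall ξ lvl x.1) * ((μ (vBall ξ lvl y.1) / μ (vBall ξ lvl x.1)) * g y.1) ^ P
          = (μ (vBall ξ lvl x.1) ^ (1-P) * μ (vBall ξ lvl y.1) ^ P) * g y.1 ^ P := by
        rw [ENNReal.mul_rpow_of_nonneg _ _ hP0.le, ENNReal.div_rpow_of_nonneg _ _ hP0.le,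
          ENNReal.rpow_sub 1 P hx0 hxt]
        simp only [div_eq_mul_inv, ENNReal.rpow_one]
        ring
      have e2 : μ (vBall ξ lvl x.1) ^ (1-P)
          ≤ (M2c C Q * bQc Q ^ j) ^ (1-P) * μ (vBall ξ lvl y.1) ^ (1-P) := by
        have h3 := mB_le' H y.2.1 y.2.2
        calc μ (vBall ξ lvl x.1) ^ (1-P)
            ≤ ((M2c C Q * bQc Q ^ j) * μ (vBall ξ lvl y.1)) ^ (1-P) := by
              refine ENNReal.rpow_le_rpow ?_ (by linarith)
              exact h3
          _ = _ := ENNReal.mul_rpow_of_nonneg _ _ (by linarith)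
      have e3 : μ (vBall ξ lvl y.1) ^ (1-P) * μ (vBall ξ lvl y.1) ^ P = μ (vBall ξ lvl y.1) := by
        rw [← ENNReal.rpow_add _ _ hy0 hyt]
        norm_num
      calc μ (vBall ξ lvl x.1) * ((μ (vBall ξ lvl y.1) / μ (vBall ξ lvl x.1)) * g y.1) ^ P
          = (μ (vBall ξ lvl x.1) ^ (1-P) * μ (vBall ξ lvl y.1) ^ P) * g y.1 ^ P := e1
        _ ≤ (((M2c C Q * bQc Q ^ j) ^ (1-P) * μ (vBall ξ lvl y.1) ^ (1-P))
              * μ (vBall ξ lvl y.1) ^ P) * g y.1 ^ P := by gcongr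
        _ = (M2c C Q * bQc Q ^ j) ^ (1-P) *
              ((μ (vBall ξ lvl y.1) ^ (1-P) * μ (vBall ξ lvl y.1) ^ P) * g y.1 ^ P) := by ring
        _ = _ := by rw [e3]
    calc μ (vBall ξ lvl x.1) * (SjE μ ξ lvl g x.1 j) ^ P
        ≤ μ (vBall ξ lvl x.1) *
            ∑' y : Yj ξ lvl x.1 j, ((μ (vBall ξ lvl y.1) / μ (vBall ξ lvl x.1)) * g y.1) ^ P :=
          mul_le_mul_right (tsum_rpow_le _ hP0 hP1) _
      _ = ∑' y : Yj ξ lvl x.1 j,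
            μ (vBall ξ lvl x.1) * ((μ (vBall ξ lvl y.1) / μ (vBall ξ lvl x.1)) * g y.1) ^ P :=
          ENNReal.tsum_mul_left.symm
      _ ≤ _ := ENNReal.tsum_le_tsum hkey
  calc AE μ ξ lvl P k (fun x => SjE μ ξ lvl g x j)
      ≤ ∑' (x : Lk lvl k), ∑' (y : Yj ξ lvl x.1 j),
          (M2c C Q * bQc Q ^ j) ^ (1-P) * (μ (vBall ξ lvl y.1) * g y.1 ^ P) :=
        ENNReal.tsum_le_tsum hstep
    _ = ∑' (y : Lk lvl (k + j)), ∑' (_ : Nset ξ lvl k y.1),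
          (M2c C Q * bQc Q ^ j) ^ (1-P) * (μ (vBall ξ lvl y.1) * g y.1 ^ P) := by
        rw [tsum_swap k j (fun _ y => (M2c C Q * bQc Q ^ j) ^ (1-P)
          * (μ (vBall ξ lvl y) * g y ^ P))]
    _ ≤ ∑' (y : Lk lvl (k + j)), NCc C Q *
          ((M2c C Q * bQc Q ^ j) ^ (1-P) * (μ (vBall ξ lvl y.1) * g y.1 ^ P)) := by
        refine ENNReal.tsum_le_tsum fun y => ?_
        have hy : k ≤ lvl y.1 := by have := y.2; omega
        exact tsum_const_le_card (Nset_card H hy).1 (Nset_card H hy).2 _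
    _ = (M2c C Q * bQc Q ^ j) ^ (1-P) * (NCc C Q * AE μ ξ lvl P (k + j) g) := by
        rw [ENNReal.tsum_mul_left]
        rw [show ∀ a b c : ℝ≥0∞, a * (b * c) = b * (a * c) from fun a b c => by ring]
        congr 1
        exact ENNReal.tsum_mul_left

lemma level_inf (H : Hyp μ C Q ξ lvl) (k : ℤ) (j : ℕ) (g : X → ℝ≥0∞) :
    AI lvl k (fun x => SjE μ ξ lvl g x j) ≤ K3c C Q * AI lvl (k + j) g := by
  refine iSup_le fun x => ?_
  calc SjE μ ξ lvl g x.1 j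
      ≤ ∑' y : Yj ξ lvl x.1 j,
          (μ (vBall ξ lvl y.1) / μ (vBall ξ lvl x.1)) * AI lvl (k + j) g := by
        refine ENNReal.tsum_le_tsum fun y => mul_le_mul_right ?_ _
        have hy : lvl y.1 = k + j := by have h1 := y.2.1; have h2 := x.2; omega
        exact le_iSup (fun z : Lk lvl (k + j) => g z.1) ⟨y.1, hy⟩
    _ = (∑' y : Yj ξ lvl x.1 j, μ (vBall ξ lvl y.1) / μ (vBall ξ lvl x.1)) * AI lvl (k + j) g :=
        ENNReal.tsum_mul_right
    _ ≤ K3c C Q * AI lvl (k + j) g := mul_le_mul_left (sumYj_div H x.1 j) _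

end Op3

section Op4
variable {Z : Type*} [MetricSpace Z] [MeasurableSpace Z] [BorelSpace Z]
  {μ : Measure Z} {C Q : ℝ} {X : Type*} {ξ : X → Z} {lvl : X → ℤ}

def wE (s : ℝ) (k : ℤ) : ℝ≥0∞ := (2:ℝ≥0∞) ^ ((k:ℝ) * s)

def VE (μ : Measure Z) (ξ : X → Z) (lvl : X → ℤ) (s P : ℝ) (k : ℤ) (g : X → ℝ≥0∞) : ℝ≥0∞ :=
  wE s k ^ P * AE μ ξ lvl P k g

def VI (lvl : X → ℤ) (s : ℝ) (k : ℤ) (g : X → ℝ≥0∞) : ℝ≥0∞ := wE s k * AI lvl k g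

lemma wE_eq (s : ℝ) (k : ℤ) : wE s k = E2 ((k:ℝ) * s) := rfl

lemma wE_shift (s P : ℝ) (k : ℤ) (j : ℕ) :
    wE s k ^ P = E2 (-(s*P)) ^ j * wE s (k + j) ^ P := by
  rw [wE_eq, wE_eq, E2_rpow, E2_rpow, E2_pow, ← E2_add]
  congr 1
  push_cast
  ring

lemma wE_shift1 (s : ℝ) (k : ℤ) (j : ℕ) : wE s k = E2 (-s) ^ j * wE s (k + j) := by
  rw [wE_eq, wE_eq, E2_pow, ← E2_add]
  congr 1
  push_cast
  ring

lemma bQc_eq : bQc Q = E2 Q := ofReal_two_rpow Q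

lemma AE_SgE_le {P : ℝ} (hP0 : 0 < P) (hP1 : P ≤ 1) (k : ℤ) (g : X → ℝ≥0∞) :
    AE μ ξ lvl P k (SgE μ ξ lvl g) ≤ ∑' j : ℕ, AE μ ξ lvl P k (fun x => SjE μ ξ lvl g x j) := by
  calc AE μ ξ lvl P k (SgE μ ξ lvl g)
      ≤ ∑' x : Lk lvl k, μ (vBall ξ lvl x.1) * ∑' j : ℕ, (SjE μ ξ lvl g x.1 j) ^ P := by
        refine ENNReal.tsum_le_tsum fun x => mul_le_mul_right ?_ _
        rw [SgE_eq]
        exact tsum_rpow_le _ hP0 hP1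
    _ = ∑' x : Lk lvl k, ∑' j : ℕ, μ (vBall ξ lvl x.1) * (SjE μ ξ lvl g x.1 j) ^ P :=
        tsum_congr fun x => ENNReal.tsum_mul_left.symm
    _ = ∑' j : ℕ, ∑' x : Lk lvl k, μ (vBall ξ lvl x.1) * (SjE μ ξ lvl g x.1 j) ^ P :=
        ENNReal.tsum_comm
    _ = _ := rfl

set_option maxHeartbeats 1000000 in
lemma master_le1 (H : Hyp μ C Q ξ lvl) {s : ℝ} (hs : 0 < s) {P : ℝ} (hP0 : 0 < P) (hP1 : P ≤ 1)
    (hPQ : Q / (Q + s) < P) :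
    ∃ CE t : ℝ≥0∞, CE ≠ ∞ ∧ t < 1 ∧ ∀ (g : X → ℝ≥0∞) (k : ℤ),
      VE μ ξ lvl s P k (SgE μ ξ lvl g) ≤
        ∑' j : ℕ, (CE * t ^ j) * VE μ ξ lvl s P (k + j) g := by
  refine ⟨(M2c C Q) ^ (1-P) * NCc C Q, E2 (Q*(1-P) - s*P), ?_, ?_, ?_⟩
  · exact ENNReal.mul_ne_top (ENNReal.rpow_ne_top_of_nonneg (by linarith) M2c_ne_top) NCc_ne_top
  · refine E2_lt_one ?_
    have h1 : Q < P * (Q + s) := (div_lt_iff₀ (by linarith [H.hQ])).mp hPQ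
    nlinarith
  intro g k
  have tfact : E2 (Q*(1-P) - s*P) = E2 (Q*(1-P)) * E2 (-(s*P)) := by
    rw [sub_eq_add_neg, E2_add]
  rw [VE]
  calc wE s k ^ P * AE μ ξ lvl P k (SgE μ ξ lvl g)
      ≤ wE s k ^ P * ∑' j : ℕ, AE μ ξ lvl P k (fun x => SjE μ ξ lvl g x j) :=
        mul_le_mul_right (AE_SgE_le hP0 hP1 k g) _
    _ = ∑' j : ℕ, wE s k ^ P * AE μ ξ lvl P k (fun x => SjE μ ξ lvl g x j) :=
        ENNReal.tsum_mul_left.symm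
    _ ≤ ∑' j : ℕ, ((M2c C Q) ^ (1-P) * NCc C Q * E2 (Q*(1-P) - s*P) ^ j)
          * VE μ ξ lvl s P (k + j) g := by
        refine ENNReal.tsum_le_tsum fun j => ?_
        calc wE s k ^ P * AE μ ξ lvl P k (fun x => SjE μ ξ lvl g x j)
            ≤ wE s k ^ P * ((M2c C Q * bQc Q ^ j) ^ (1-P)
                * (NCc C Q * AE μ ξ lvl P (k + j) g)) :=
              mul_le_mul_right (levelP_le1 H hP0 hP1 k j g) _
          _ = ((M2c C Q) ^ (1-P) * NCc C Q * E2 (Q*(1-P) - s*P) ^ j)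
                * VE μ ξ lvl s P (k + j) g := by
              rw [ENNReal.mul_rpow_of_nonneg _ _ (by linarith : (0:ℝ) ≤ 1-P),
                pow_rpow_comm, bQc_eq, E2_rpow, wE_shift s P k j, tfact, mul_pow, VE]
              ring
  
set_option maxHeartbeats 1000000 in
lemma master_ge1 (H : Hyp μ C Q ξ lvl) {s : ℝ} (hs : 0 < s) {P : ℝ} (hP : 1 ≤ P) :
    ∃ CE t : ℝ≥0∞, CE ≠ ∞ ∧ t < 1 ∧ ∀ (g : X → ℝ≥0∞) (k : ℤ),
      VE μ ξ lvl s P k (SgE μ ξ lvl g) ≤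
        ∑' j : ℕ, (CE * t ^ j) * VE μ ξ lvl s P (k + j) g := by
  have hP0 : (0:ℝ) < P := by linarith
  set Gw : ℝ≥0∞ := ∑' j : ℕ, (E2 (-(s/2))) ^ j with hGw
  have hGw_eq : Gw = (1 - E2 (-(s/2)))⁻¹ := ENNReal.tsum_geometric _
  have hGw_fin : Gw ≠ ∞ := by
    rw [hGw_eq]
    exact ENNReal.inv_ne_top.2 (tsub_pos_of_lt (E2_lt_one (by linarith))).ne'
  refine ⟨Gw ^ (P-1) * ((K3c C Q) ^ (P-1) * NCc C Q), E2 (s/2*(P-1) - s*P), ?_, ?_, ?_⟩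
  · exact ENNReal.mul_ne_top (ENNReal.rpow_ne_top_of_nonneg (by linarith) hGw_fin)
      (ENNReal.mul_ne_top (ENNReal.rpow_ne_top_of_nonneg (by linarith) K3c_ne_top) NCc_ne_top)
  · refine E2_lt_one ?_
    nlinarith
  intro g k
  have hpt : ∀ x : X, (SgE μ ξ lvl g x) ^ P
      ≤ Gw ^ (P-1) * ∑' j : ℕ, E2 (s/2*(P-1)) ^ j * (SjE μ ξ lvl g x j) ^ P := by
    intro x
    have hwf : ∀ j : ℕ, (E2 (-(s/2))) ^ j * ((E2 (s/2)) ^ j * SjE μ ξ lvl g x j)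
        = SjE μ ξ lvl g x j := by
      intro j
      rw [← mul_assoc, ← mul_pow, ← E2_add, show -(s/2) + s/2 = 0 by ring]
      simp [E2]
    have hJ := tsum_jensen hP (fun j : ℕ => (E2 (-(s/2))) ^ j)
      (fun j : ℕ => (E2 (s/2)) ^ j * SjE μ ξ lvl g x j)
    simp only [hwf] at hJ
    rw [← SgE_eq] at hJ
    refine hJ.trans ?_
    refine mul_le_mul_right (le_of_eq ?_) _
    refine tsum_congr fun j => ?_
    rw [ENNReal.mul_rpow_of_nonneg _ _ hP0.le, pow_rpow_comm, E2_rpow, ← mul_assoc,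
      ← mul_pow, ← E2_add]
    congr 3
    ring
  rw [VE, AE]
  calc wE s k ^ P * ∑' x : Lk lvl k, μ (vBall ξ lvl x.1) * (SgE μ ξ lvl g x.1) ^ P
      ≤ wE s k ^ P * ∑' x : Lk lvl k, μ (vBall ξ lvl x.1) *
          (Gw ^ (P-1) * ∑' j : ℕ, E2 (s/2*(P-1)) ^ j * (SjE μ ξ lvl g x.1 j) ^ P) := by
        exact mul_le_mul_right (ENNReal.tsum_le_tsum fun x : Lk lvl k => mul_le_mul_right (hpt x.1) _) _
    _ = wE s k ^ P * (Gw ^ (P-1) * ∑' j : ℕ, E2 (s/2*(P-1)) ^ j *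
          AE μ ξ lvl P k (fun x => SjE μ ξ lvl g x j)) := by
        congr 1
        calc ∑' x : Lk lvl k, μ (vBall ξ lvl x.1) *
              (Gw ^ (P-1) * ∑' j : ℕ, E2 (s/2*(P-1)) ^ j * (SjE μ ξ lvl g x.1 j) ^ P)
            = Gw ^ (P-1) * ∑' x : Lk lvl k, μ (vBall ξ lvl x.1) *
                (∑' j : ℕ, E2 (s/2*(P-1)) ^ j * (SjE μ ξ lvl g x.1 j) ^ P) := by
              rw [← ENNReal.tsum_mul_left]
              exact tsum_congr fun x => by ring
          _ = Gw ^ (P-1) * ∑' x : Lk lvl k, ∑' j : ℕ,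
                E2 (s/2*(P-1)) ^ j * (μ (vBall ξ lvl x.1) * (SjE μ ξ lvl g x.1 j) ^ P) := by
              congr 1
              refine tsum_congr fun x => ?_
              rw [← ENNReal.tsum_mul_left]
              exact tsum_congr fun j => by ring
          _ = Gw ^ (P-1) * ∑' j : ℕ, ∑' x : Lk lvl k,
                E2 (s/2*(P-1)) ^ j * (μ (vBall ξ lvl x.1) * (SjE μ ξ lvl g x.1 j) ^ P) := by
              rw [ENNReal.tsum_comm (f := fun (x : Lk lvl k) (j : ℕ) =>
                E2 (s/2*(P-1)) ^ j * (μ (vBall ξ lvl x.1) * (SjE μ ξ lvl g x.1 j) ^ P))]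
          _ = Gw ^ (P-1) * ∑' j : ℕ, E2 (s/2*(P-1)) ^ j *
                AE μ ξ lvl P k (fun x => SjE μ ξ lvl g x j) := by
              congr 1
              exact tsum_congr fun j => ENNReal.tsum_mul_left
    _ ≤ wE s k ^ P * (Gw ^ (P-1) * ∑' j : ℕ, E2 (s/2*(P-1)) ^ j *
          ((K3c C Q) ^ (P-1) * (NCc C Q * AE μ ξ lvl P (k + j) g))) := by
        refine mul_le_mul_right (mul_le_mul_right (ENNReal.tsum_le_tsum fun j =>
          mul_le_mul_right (levelP_ge1 H hP k j g) _) _) _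
    _ = ∑' j : ℕ, ((Gw ^ (P-1) * ((K3c C Q) ^ (P-1) * NCc C Q)) * E2 (s/2*(P-1) - s*P) ^ j)
          * VE μ ξ lvl s P (k + j) g := by
        rw [← ENNReal.tsum_mul_left, ← ENNReal.tsum_mul_left]
        refine tsum_congr fun j => ?_
        have tfact : E2 (s/2*(P-1) - s*P) = E2 (s/2*(P-1)) * E2 (-(s*P)) := by
          rw [sub_eq_add_neg, E2_add]
        rw [tfact, mul_pow, wE_shift s P k j, VE]
        ring
  
set_option maxHeartbeats 1000000 in
lemma master_inf (H : Hyp μ C Q ξ lvl) {s : ℝ} (hs : 0 < s) :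
    ∀ (g : X → ℝ≥0∞) (k : ℤ),
      VI lvl s k (SgE μ ξ lvl g) ≤ ∑' j : ℕ, (K3c C Q * E2 (-s) ^ j) * VI lvl s (k + j) g := by
  intro g k
  have h1 : AI lvl k (SgE μ ξ lvl g) ≤ ∑' j : ℕ, AI lvl k (fun x => SjE μ ξ lvl g x j) := by
    refine iSup_le fun x => ?_
    rw [SgE_eq]
    exact ENNReal.tsum_le_tsum fun j => le_iSup (fun x' : Lk lvl k => SjE μ ξ lvl g x'.1 j) x
  rw [VI]
  calc wE s k * AI lvl k (SgE μ ξ lvl g)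
      ≤ wE s k * ∑' j : ℕ, AI lvl k (fun x => SjE μ ξ lvl g x j) := mul_le_mul_right h1 _
    _ ≤ wE s k * ∑' j : ℕ, K3c C Q * AI lvl (k + j) g := by
        exact mul_le_mul_right (ENNReal.tsum_le_tsum fun j => level_inf H k j g) _
    _ = ∑' j : ℕ, (K3c C Q * E2 (-s) ^ j) * VI lvl s (k + j) g := by
        rw [← ENNReal.tsum_mul_left]
        refine tsum_congr fun j => ?_
        rw [VI, wE_shift1 s k j]
        ring

end Op4

section Assemble
variable {Z : Type*} [MetricSpace Z] [MeasurableSpace Z] [BorelSpace Z]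
  {μ : Measure Z} {C Q : ℝ} {X : Type*} {ξ : X → Z} {lvl : X → ℤ} {s : ℝ} {p q : ℝ≥0∞}

lemma wE_ne_zero (s : ℝ) (k : ℤ) : wE s k ≠ 0 :=
  (ENNReal.rpow_pos two_pos ENNReal.ofNat_ne_top).ne'

lemma wE_pow_ne_zero (s P : ℝ) (k : ℤ) : wE s k ^ P ≠ 0 :=
  (ENNReal.rpow_pos (ENNReal.rpow_pos two_pos ENNReal.ofNat_ne_top) (E2_ne_top _)).ne'

lemma seqNorm_mono {g1 g2 : X → ℝ≥0∞} (h : ∀ x, g1 x ≤ g2 x) :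
    seqNorm μ ξ lvl s p q g1 ≤ seqNorm μ ξ lvl s p q g2 := by
  rw [seqNorm, seqNorm]
  refine sumPartG_mono _ _ fun k => ?_
  exact mul_le_mul_right (sumPartG_mono _ _ fun x : {x : X // lvl x = k} => h x.1) _

lemma seqNorm_eq_inf (hptop : p = ∞) (g : X → ℝ≥0∞) :
    seqNorm μ ξ lvl s p q g = sumPartG q (fun _ : ℤ => 1) (fun k => VI lvl s k g) := by
  subst hptop
  rw [seqNorm]
  congr 1

lemma seqNorm_eq_fin (hptop : p ≠ ∞) (hp0 : p ≠ 0) (hq0 : q ≠ 0) (g : X → ℝ≥0∞) :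
    seqNorm μ ξ lvl s p q g
      = (sumPartG (q/p) (fun _ : ℤ => 1)
          (fun k => VE μ ξ lvl s p.toReal k g)) ^ (1/p.toReal) := by
  have hP : 0 < p.toReal := ENNReal.toReal_pos hp0 hptop
  have h3 : ∀ (a : ℝ≥0∞), (a ^ p.toReal) ^ (1/p.toReal) = a := fun a => by
    rw [← ENNReal.rpow_mul, mul_one_div, div_self hP.ne', ENNReal.rpow_one]
  have hVE : ∀ k, VE μ ξ lvl s p.toReal k g
      = (wE s k * (AE μ ξ lvl p.toReal k g) ^ (1/p.toReal)) ^ p.toReal := by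
    intro k
    rw [ENNReal.mul_rpow_of_nonneg _ _ hP.le, ← ENNReal.rpow_mul,
      one_div_mul_cancel hP.ne', ENNReal.rpow_one, VE]
  by_cases hqtop : q = ∞
  · have hqp : q / p = ∞ := by rw [hqtop, ENNReal.top_div, if_neg hptop]
    simp only [seqNorm, sumPartG, if_pos hqtop, if_pos hqp, if_neg hptop]
    rw [iSup_rpow' _ (by positivity : (0:ℝ) < 1/p.toReal)]
    refine iSup_congr fun k => ?_
    rw [hVE k, h3]
    rfl
  · have hRq : 0 < q.toReal := ENNReal.toReal_pos hq0 hqtop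
    have hqp_ne : q / p ≠ ∞ := by
      rw [Ne, ENNReal.div_eq_top]
      push_neg
      exact ⟨fun _ => hp0, fun h => absurd h hqtop⟩
    have hqpt : (q/p).toReal = q.toReal / p.toReal := ENNReal.toReal_div q p
    simp only [seqNorm, sumPartG, if_neg hqtop, if_neg hptop, if_neg hqp_ne]
    rw [hqpt, ← ENNReal.rpow_mul]
    have he : (1/(q.toReal/p.toReal)) * (1/p.toReal) = 1/q.toReal := by
      rw [one_div_div]
      field_simp
    rw [he]
    congr 1
    refine tsum_congr fun k => ?_
    congr 1
    rw [hVE k, ← ENNReal.rpow_mul]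
    congr 1
    field_simp

lemma umbrella (H : Hyp μ C Q ξ lvl) (hs : 0 < s)
    (hp : ENNReal.ofReal (Q / (Q + s)) < p) (hq : 0 < q) :
    ∃ Cb : ℝ≥0∞, Cb ≠ ∞ ∧ ∀ g : X → ℝ≥0∞,
      seqNorm μ ξ lvl s p q (SgE μ ξ lvl g) ≤ Cb * seqNorm μ ξ lvl s p q g ∧
      (seqNorm μ ξ lvl s p q g < ∞ → ∀ x : X, SgE μ ξ lvl g x < ∞) := by
  by_cases hptop : p = ∞
  · obtain ⟨CC, hCC, hconv⟩ := conv_bound (r := q) hq.ne'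
      (K3c_ne_top (C := C) (Q := Q)) (E2_lt_one (neg_lt_zero.mpr hs))
    refine ⟨CC, hCC, fun g => ?_⟩
    have hb : ∀ k : ℤ, VI lvl s k (SgE μ ξ lvl g)
        ≤ ∑' j : ℕ, (K3c C Q * E2 (-s) ^ j) * VI lvl s (k + j) g := master_inf H hs g
    refine ⟨?_, ?_⟩
    · rw [seqNorm_eq_inf hptop, seqNorm_eq_inf hptop]
      exact hconv _ _ hb
    · intro hfin x
      have h2 : sumPartG q (fun _ : ℤ => 1) (fun k => VI lvl s k g) < ∞ := by
        have hh := seqNorm_eq_inf (μ := μ) (ξ := ξ) (lvl := lvl) (s := s) (q := q) hptop g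
        rw [← hh]
        exact hfin
      have h3 : VI lvl s (lvl x) (SgE μ ξ lvl g)
          ≤ (∑' j : ℕ, K3c C Q * E2 (-s) ^ j) *
              sumPartG q (fun _ : ℤ => 1) (fun k => VI lvl s k g) := by
        refine (hb (lvl x)).trans ?_
        rw [← ENNReal.tsum_mul_right]
        exact ENNReal.tsum_le_tsum fun j =>
          mul_le_mul_right (le_sumPartG_one hq.ne' (fun k => VI lvl s k g) _) _
      have h4 : VI lvl s (lvl x) (SgE μ ξ lvl g) < ∞ :=
        lt_of_le_of_lt h3 (ENNReal.mul_lt_top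
          (lt_top_iff_ne_top.2 (geom_sum_fin K3c_ne_top (E2_lt_one (neg_lt_zero.mpr hs)))) h2)
      have h5 : AI lvl (lvl x) (SgE μ ξ lvl g) < ∞ := by
        by_contra hcon
        rw [not_lt, top_le_iff] at hcon
        rw [VI, hcon, ENNReal.mul_top (wE_ne_zero s (lvl x))] at h4
        exact (lt_irrefl _ h4).elim
      exact (le_iSup (fun x' : Lk lvl (lvl x) => SgE μ ξ lvl g x'.1) ⟨x, rfl⟩).trans_lt h5
  · have hp0 : p ≠ 0 := by
      intro h
      rw [h] at hp
      simp at hp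
    have hP : 0 < p.toReal := ENNReal.toReal_pos hp0 hptop
    have hPQ : Q / (Q + s) < p.toReal := by
      have h1 : (ENNReal.ofReal (Q/(Q+s))).toReal < p.toReal :=
        (ENNReal.toReal_lt_toReal ENNReal.ofReal_ne_top hptop).mpr hp
      rwa [ENNReal.toReal_ofReal (div_nonneg H.hQ.le (by linarith [H.hQ]))] at h1
    obtain ⟨CE, t, hCE, ht, hmas⟩ := (le_or_gt p.toReal 1).elim
      (fun h => master_le1 H hs hP h hPQ) (fun h => master_ge1 H hs h.le)
    have hr0 : q / p ≠ 0 := by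
      rw [Ne, ENNReal.div_eq_zero_iff]
      push_neg
      exact ⟨hq.ne', hptop⟩
    obtain ⟨CC, hCC, hconv⟩ := conv_bound hr0 hCE ht
    refine ⟨CC ^ (1/p.toReal), ENNReal.rpow_ne_top_of_nonneg (by positivity) hCC, fun g => ?_⟩
    have hb := hmas g
    have hSeq := seqNorm_eq_fin (μ := μ) (ξ := ξ) (lvl := lvl) (s := s) (q := q) hptop hp0 hq.ne' g
    refine ⟨?_, ?_⟩
    · rw [seqNorm_eq_fin hptop hp0 hq.ne', hSeq]
      calc (sumPartG (q/p) (fun _ : ℤ => 1)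
              (fun k => VE μ ξ lvl s p.toReal k (SgE μ ξ lvl g))) ^ (1/p.toReal)
          ≤ (CC * sumPartG (q/p) (fun _ : ℤ => 1)
              (fun k => VE μ ξ lvl s p.toReal k g)) ^ (1/p.toReal) :=
            ENNReal.rpow_le_rpow (hconv _ _ hb) (by positivity)
        _ = _ := ENNReal.mul_rpow_of_nonneg _ _ (by positivity)
    · intro hfin x
      have hS : sumPartG (q/p) (fun _ : ℤ => 1) (fun k => VE μ ξ lvl s p.toReal k g) < ∞ := by
        have he2 : sumPartG (q/p) (fun _ : ℤ => 1) (fun k => VE μ ξ lvl s p.toReal k g)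
            = ((sumPartG (q/p) (fun _ : ℤ => 1)
                (fun k => VE μ ξ lvl s p.toReal k g)) ^ (1/p.toReal)) ^ p.toReal := by
          rw [← ENNReal.rpow_mul, one_div_mul_cancel hP.ne', ENNReal.rpow_one]
        rw [he2, ← hSeq]
        exact lt_top_iff_ne_top.2 (ENNReal.rpow_ne_top_of_nonneg hP.le hfin.ne)
      have h3 : VE μ ξ lvl s p.toReal (lvl x) (SgE μ ξ lvl g)
          ≤ (∑' j : ℕ, CE * t ^ j) *
              sumPartG (q/p) (fun _ : ℤ => 1) (fun k => VE μ ξ lvl s p.toReal k g) := by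
        refine (hb (lvl x)).trans ?_
        rw [← ENNReal.tsum_mul_right]
        exact ENNReal.tsum_le_tsum fun j =>
          mul_le_mul_right (le_sumPartG_one hr0 (fun k => VE μ ξ lvl s p.toReal k g) _) _
      have h4 : VE μ ξ lvl s p.toReal (lvl x) (SgE μ ξ lvl g) < ∞ :=
        lt_of_le_of_lt h3 (ENNReal.mul_lt_top
          (lt_top_iff_ne_top.2 (geom_sum_fin hCE ht)) hS)
      have h5 : AE μ ξ lvl p.toReal (lvl x) (SgE μ ξ lvl g) < ∞ := by
        by_contra hcon
        rw [not_lt, top_le_iff] at hcon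
        rw [VE, hcon, ENNReal.mul_top (wE_pow_ne_zero s p.toReal (lvl x))] at h4
        exact (lt_irrefl _ h4).elim
      have h6 : μ (vBall ξ lvl x) * (SgE μ ξ lvl g x) ^ p.toReal
          ≤ AE μ ξ lvl p.toReal (lvl x) (SgE μ ξ lvl g) :=
        ENNReal.le_tsum (⟨x, rfl⟩ : Lk lvl (lvl x))
      by_contra hcon
      rw [not_lt, top_le_iff] at hcon
      rw [hcon, ENNReal.top_rpow_of_pos hP,
        ENNReal.mul_top (mB_pos H x).ne'] at h6
      exact absurd (h6.trans_lt h5) (lt_irrefl _)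

end Assemble
end St9

/-- the averaging operator
`Tu(x) = Σ_{|y| ≥ |x|, B(y)∩B(x)≠∅} (μ(B(y))/μ(B(x))) u(y)` is well defined and bounded
on `I^s_{p,q}(X)`. -/
theorem statement9 {Z : Type*} [MetricSpace Z] [MeasurableSpace Z] [BorelSpace Z]
    (μ : Measure Z) (C Q : ℝ) (hC : 1 ≤ C) (hQ : 0 < Q)
    (hdoub : ∀ (ζ : Z) (r lam : ℝ), 0 < r → 1 ≤ lam →
      μ (Metric.ball ζ (lam * r)) ≤ ENNReal.ofReal (C * lam ^ Q) * μ (Metric.ball ζ r))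
    (hpos : ∀ (ζ : Z) (r : ℝ), 0 < r → 0 < μ (Metric.ball ζ r))
    (hfin : ∀ (ζ : Z) (r : ℝ), μ (Metric.ball ζ r) < ∞)
    {X : Type*} (ξ : X → Z) (lvl : X → ℤ)
    (hsep : ∀ x y : X, x ≠ y → lvl x = lvl y → (2:ℝ) ^ (-lvl x - 1) ≤ dist (ξ x) (ξ y))
    (hmax : ∀ (n : ℤ) (z : Z), ∃ x : X, lvl x = n ∧ dist z (ξ x) < (2:ℝ) ^ (-n - 1))
    (s : ℝ) (hs : 0 < s) (p q : ℝ≥0∞)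
    (hp : ENNReal.ofReal (Q / (Q + s)) < p) (hq : 0 < q) :
    ∃ Cb : ℝ≥0∞, Cb ≠ ∞ ∧ ∀ u : X → ℂ,
      seqNorm μ ξ lvl s p q (fun x => (‖u x‖₊ : ℝ≥0∞)) < ∞ →
      (∀ x : X, Summable (fun y : {y : X // lvl x ≤ lvl y ∧ (vBall ξ lvl y ∩ vBall ξ lvl x).Nonempty} =>
        ((μ (vBall ξ lvl y.1)).toReal / (μ (vBall ξ lvl x)).toReal) • u y.1)) ∧
      seqNorm μ ξ lvl s p q (fun x =>
          (‖∑' y : {y : X // lvl x ≤ lvl y ∧ (vBall ξ lvl y ∩ vBall ξ lvl x).Nonempty},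
            ((μ (vBall ξ lvl y.1)).toReal / (μ (vBall ξ lvl x)).toReal) • u y.1‖₊ : ℝ≥0∞)) ≤
        Cb * seqNorm μ ξ lvl s p q (fun x => (‖u x‖₊ : ℝ≥0∞)) := by
  have H : St9.Hyp μ C Q ξ lvl := ⟨hC, hQ, hdoub, hpos, hfin, hsep⟩
  obtain ⟨Cb, hCb, hmain⟩ := St9.umbrella H hs hp hq
  refine ⟨Cb, hCb, fun u hu => ?_⟩
  set g : X → ℝ≥0∞ := fun x => (‖u x‖₊ : ℝ≥0∞) with hg
  have hSfin : ∀ x : X, St9.SgE μ ξ lvl g x < ∞ := (hmain g).2 hu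
  have key : ∀ x : X, ∀ y : St9.Dom ξ lvl x,
      ((‖((μ (vBall ξ lvl y.1)).toReal / (μ (vBall ξ lvl x)).toReal) • u y.1‖₊ : ℝ≥0) : ℝ≥0∞)
        = μ (vBall ξ lvl y.1) / μ (vBall ξ lvl x) * g y.1 := by
    intro x y
    rw [nnnorm_smul, ENNReal.coe_mul]
    congr 1
    rw [← enorm_eq_nnnorm, Real.enorm_eq_ofReal (by positivity),
      ENNReal.ofReal_div_of_pos (ENNReal.toReal_pos (St9.mB_pos H x).ne' (St9.mB_fin H x).ne),
      ENNReal.ofReal_toReal (St9.mB_fin H y.1).ne, ENNReal.ofReal_toReal (St9.mB_fin H x).ne]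
  have hsum2 : ∀ x : X, Summable (fun y : St9.Dom ξ lvl x =>
      ‖((μ (vBall ξ lvl y.1)).toReal / (μ (vBall ξ lvl x)).toReal) • u y.1‖₊) := by
    intro x
    refine ENNReal.tsum_coe_ne_top_iff_summable.1 ?_
    rw [tsum_congr (key x)]
    exact (hSfin x).ne
  have hsummable : ∀ x : X, Summable (fun y : St9.Dom ξ lvl x =>
      ((μ (vBall ξ lvl y.1)).toReal / (μ (vBall ξ lvl x)).toReal) • u y.1) :=
    fun x => Summable.of_nnnorm (hsum2 x)
  refine ⟨hsummable, ?_⟩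
  refine le_trans (St9.seqNorm_mono (g2 := St9.SgE μ ξ lvl g) fun x => ?_) (hmain g).1
  calc ((‖∑' y : St9.Dom ξ lvl x,
        ((μ (vBall ξ lvl y.1)).toReal / (μ (vBall ξ lvl x)).toReal) • u y.1‖₊ : ℝ≥0) : ℝ≥0∞)
      ≤ ((∑' y : St9.Dom ξ lvl x,
          ‖((μ (vBall ξ lvl y.1)).toReal / (μ (vBall ξ lvl x)).toReal) • u y.1‖₊ : ℝ≥0) : ℝ≥0∞) :=
        ENNReal.coe_le_coe.2 (nnnorm_tsum_le (hsum2 x))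
    _ = ∑' y : St9.Dom ξ lvl x,
          ((‖((μ (vBall ξ lvl y.1)).toReal / (μ (vBall ξ lvl x)).toReal) • u y.1‖₊ : ℝ≥0) : ℝ≥0∞) :=
        ENNReal.coe_tsum (hsum2 x)
    _ = St9.SgE μ ξ lvl g x := tsum_congr (key x)
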